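/- For d ≥ 5, if a(d) > (2d-4)(2d-3)!! and a(d-1) > (2d-6)(2d-5)!!, and a satisfies the recurrence a(d+1) = (2d+1)!! − ∑_{k=1}^{d}(2d-2k+1)!!·a(k) with a(1)=1, a(2)=2, then a(d+1) < (2d-1)·(2d-1)!!. -/
import Mathlib


/-- The double factorial `(2d-1)!! = ∏ i ∈ Finset.range d, (2i+1)`, with `(-1)!! = oddDF 0 = 1`. -/
def oddDF (d : ℕ) : ℕ := ∏ i ∈ Finset.range d, (2 * i + 1)

lemma oddDF_succ (n : ℕ) : oddDF (n + 1) = oddDF n * (2 * n + 1) :=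
  Finset.prod_range_succ _ _

lemma oddDF_pos (n : ℕ) : 0 < oddDF n :=
  Finset.prod_pos (fun i _ => by omega)

/-- Inductive step of the upper bound: for `d ≥ 5`, if `a(1)=1`, `a(2)=2`,
`a(d) > (2d-4)(2d-3)!!`, `a(d-1) > (2d-6)(2d-5)!!`, and
`a(d+1) = (2d+1)!! − ∑_{k=1}^{d}(2d-2k+1)!!·a(k)`, then `a(d+1) < (2d-1)·(2d-1)!!`. -/
theorem a_upper_inductive_step (a : ℕ → ℕ) (d : ℕ) (hd : 5 ≤ d)
    (h1 : a 1 = 1) (h2 : a 2 = 2)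
    (had : (2 * d - 4) * oddDF (d - 1) < a d)
    (had1 : (2 * d - 6) * oddDF (d - 2) < a (d - 1))
    (hrec : a (d + 1) = oddDF (d + 1) - ∑ k ∈ Finset.Icc 1 d, oddDF (d - k + 1) * a k) :
    a (d + 1) < (2 * d - 1) * oddDF d := by
  obtain ⟨e, rfl⟩ : ∃ e, d = e + 5 := ⟨d - 5, by omega⟩
  simp only [show e + 5 - 1 = e + 4 from by omega, show e + 5 - 2 = e + 3 from by omega,
    show 2 * (e + 5) - 4 = 2 * e + 6 from by omega,
    show 2 * (e + 5) - 6 = 2 * e + 4 from by omega,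
    show 2 * (e + 5) - 1 = 2 * e + 9 from by omega] at had had1 ⊢
  set S := ∑ k ∈ Finset.Icc 1 (e + 5), oddDF (e + 5 - k + 1) * a k with hSdef
  -- lower bound on S
  have hsub : ({1, 2, e + 4, e + 5} : Finset ℕ) ⊆ Finset.Icc 1 (e + 5) := by
    intro x hx
    simp only [Finset.mem_insert, Finset.mem_singleton] at hx
    simp only [Finset.mem_Icc]
    omega
  have hsum : ∑ k ∈ ({1, 2, e + 4, e + 5} : Finset ℕ), oddDF (e + 5 - k + 1) * a k ≤ S := by
    exact Finset.sum_le_sum_of_subset hsub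
  have hexp : ∑ k ∈ ({1, 2, e + 4, e + 5} : Finset ℕ), oddDF (e + 5 - k + 1) * a k
      = oddDF (e + 5) * a 1 + oddDF (e + 4) * a 2
        + oddDF 2 * a (e + 4) + oddDF 1 * a (e + 5) := by
    rw [Finset.sum_insert (by simp only [Finset.mem_insert, Finset.mem_singleton]; omega),
      Finset.sum_insert (by simp only [Finset.mem_insert, Finset.mem_singleton]; omega),
      Finset.sum_insert (by simp only [Finset.mem_singleton]; omega), Finset.sum_singleton,
      show e + 5 - 1 + 1 = e + 5 from by omega, show e + 5 - 2 + 1 = e + 4 from by omega,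
      show e + 5 - (e + 4) + 1 = 2 from by omega, show e + 5 - (e + 5) + 1 = 1 from by omega]
    ring
  have hDF1 : oddDF 1 = 1 := by decide
  have hDF2 : oddDF 2 = 3 := by decide
  have hS : oddDF (e + 5) + 2 * oddDF (e + 4) + 3 * a (e + 4) + a (e + 5) ≤ S := by
    rw [hexp, h1, h2, hDF1, hDF2] at hsum
    omega
  have hP6 : oddDF (e + 6) = oddDF (e + 5) * (2 * e + 11) := by
    rw [oddDF_succ]; ring_nf
  have hP5 : oddDF (e + 5) = oddDF (e + 4) * (2 * e + 9) := by
    rw [oddDF_succ]; ring_nf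
  have hP4 : oddDF (e + 4) = oddDF (e + 3) * (2 * e + 7) := by
    rw [oddDF_succ]; ring_nf
  have hP3pos : 0 < oddDF (e + 3) := oddDF_pos _
  have hS2 : 2 * oddDF (e + 5) + 1 ≤ S := by nlinarith
  have hQ : oddDF (e + 6) = (2 * e + 9) * oddDF (e + 5) + 2 * oddDF (e + 5) := by
    rw [hP6]; ring
  have hQpos : 0 < (2 * e + 9) * oddDF (e + 5) :=
    Nat.mul_pos (by omega) (oddDF_pos _)
  have hrec' : a (e + 6) = oddDF (e + 6) - S := hrec
  show a (e + 6) < (2 * e + 9) * oddDF (e + 5)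
  omega
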